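/- Let R be a strongly G-graded unital ring with R_e a simple ring. If R_g ≅ R_e as R_e-bimodules implies g = e, then C_R(R_e) = Z(R_e). -/

import Mathlib

open DirectSum Pointwise

namespace Controlled

variable {G R : Type*} [AddGroup G] [DecidableEq G] [Ring R]

/-- `P` is an `R_e`-sub-bimodule of `R` (w.r.t. the grading `𝒜`, written additively,
so `R_e = 𝒜 0`). -/
def IsSubBimodule (𝒜 : G → AddSubgroup R) (P : AddSubgroup R) : Prop :=
  ∀ a ∈ 𝒜 0, ∀ x ∈ P, a * x ∈ P ∧ x * a ∈ P

/-- The `R_e`-bimodule `R_H = ⊕_{h ∈ H} R_h` (internally, the subgroup generated by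
the `R_h`, `h ∈ H`; the sum is automatically direct). `R_∅ = ⊥ = {0}`. -/
def RH (𝒜 : G → AddSubgroup R) (H : Set G) : AddSubgroup R := ⨆ h ∈ H, 𝒜 h

/-- An `R_e`-bimodule isomorphism between additive subgroups `P` and `Q` of `R`:
an additive equivalence compatible with left and right multiplication by `R_e = 𝒜 0`. -/
structure BimodIso (𝒜 : G → AddSubgroup R) (P Q : AddSubgroup R) where
  toEquiv : P ≃+ Q
  map_left : ∀ (a x : R), a ∈ 𝒜 0 → ∀ (hx : x ∈ P) (hax : a * x ∈ P),
    (toEquiv ⟨a * x, hax⟩ : R) = a * (toEquiv ⟨x, hx⟩ : R)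
  map_right : ∀ (a x : R), a ∈ 𝒜 0 → ∀ (hx : x ∈ P) (hxa : x * a ∈ P),
    (toEquiv ⟨x * a, hxa⟩ : R) = (toEquiv ⟨x, hx⟩ : R) * a

/-- `R` is `G`-controlled: `H ↦ R_H` is a bijection from subsets of `G` onto the
`R_e`-sub-bimodules of `R`, and `R_S ≅ R_T` (as `R_e`-bimodules) iff `S = T`. -/
def IsControlled (𝒜 : G → AddSubgroup R) : Prop :=
  (∀ H : Set G, IsSubBimodule 𝒜 (RH 𝒜 H)) ∧
  Function.Injective (RH 𝒜) ∧
  (∀ P : AddSubgroup R, IsSubBimodule 𝒜 P → ∃ H : Set G, RH 𝒜 H = P) ∧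
  (∀ S T : Set G, Nonempty (BimodIso 𝒜 (RH 𝒜 S) (RH 𝒜 T)) ↔ S = T)

/-- `P` is a (nonzero) simple `R_e`-bimodule contained in `R`. -/
def IsSimpleBimod (𝒜 : G → AddSubgroup R) (P : AddSubgroup R) : Prop :=
  P ≠ ⊥ ∧ ∀ Q : AddSubgroup R, Q ≤ P → IsSubBimodule 𝒜 Q → Q = ⊥ ∨ Q = P

/-- The product `AB` of two additive subgroups of `R`: all finite sums of products. -/
def mulSub (A B : AddSubgroup R) : AddSubgroup R :=
  AddSubgroup.closure ((A : Set R) * (B : Set R))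

/-- `R` is strongly graded: `R_g R_h = R_{g+h}` for all `g, h`. -/
def IsStronglyGraded (𝒜 : G → AddSubgroup R) : Prop :=
  ∀ g h : G, mulSub (𝒜 g) (𝒜 h) = 𝒜 (g + h)

/-- `C_R(R_e) = Z(R_e)` as subsets of `R`. -/
def CentralizerEqCenter (𝒜 : G → AddSubgroup R) : Prop :=
  {x : R | ∀ r ∈ 𝒜 0, x * r = r * x} = {x : R | x ∈ 𝒜 0 ∧ ∀ r ∈ 𝒜 0, x * r = r * x}

/-- A two-sided ideal `I` is graded if each homogeneous component of each of its
elements again lies in `I` (equivalently, `I = ⊕_g (I ∩ R_g)`). -/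
def IsGradedIdeal (𝒜 : G → AddSubgroup R) [GradedRing 𝒜] (I : TwoSidedIdeal R) : Prop :=
  ∀ x ∈ I, ∀ g : G, (DirectSum.decompose 𝒜 x g : R) ∈ I

/-- `R` is graded simple: the only graded two-sided ideals are `{0}` and `R`. -/
def IsGradedSimple (𝒜 : G → AddSubgroup R) [GradedRing 𝒜] : Prop :=
  ∀ I : TwoSidedIdeal R, IsGradedIdeal 𝒜 I → I = ⊥ ∨ I = ⊤

end Controlled

variable {G R : Type*} [AddGroup G] [DecidableEq G] [Ring R]



section Aux

variable {G R : Type*} [AddGroup G] [DecidableEq G] [Ring R]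

lemma key_iso (𝒜 : G → AddSubgroup R) [GradedRing 𝒜]
    (hstrong : Controlled.IsStronglyGraded 𝒜)
    (hsimple : IsSimpleRing ↥(𝒜 0)) {g : G} {y : R}
    (hy : y ∈ 𝒜 g) (hy0 : y ≠ 0)
    (hcomm : ∀ a ∈ 𝒜 0, a * y = y * a) :
    Nonempty (Controlled.BimodIso 𝒜 (𝒜 g) (𝒜 0)) := by
  have hmul : ∀ a ∈ 𝒜 0, a * y ∈ 𝒜 g := fun a ha => by
    simpa using SetLike.mul_mem_graded ha hy
  have hmulr : ∀ b ∈ 𝒜 (-g), b * y ∈ 𝒜 0 := fun b hb => by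
    have := SetLike.mul_mem_graded hb hy
    rwa [neg_add_cancel] at this
  -- The ideal I = R_{-g} y of R_0
  set I : TwoSidedIdeal ↥(𝒜 0) := TwoSidedIdeal.mk'
    {a | ∃ b ∈ 𝒜 (-g), (a : R) = b * y}
    ⟨0, (𝒜 (-g)).zero_mem, by simp⟩
    (fun {u v} ⟨b, hb, hu⟩ ⟨c, hc, hv⟩ =>
      ⟨b + c, (𝒜 (-g)).add_mem hb hc, by push_cast [hu, hv]; rw [add_mul]⟩)
    (fun {u} ⟨b, hb, hu⟩ => ⟨-b, (𝒜 (-g)).neg_mem hb, by push_cast [hu]; rw [neg_mul]⟩)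
    (fun {u v} ⟨b, hb, hv⟩ => by
      refine ⟨(u : R) * b, ?_, ?_⟩
      · have := SetLike.mul_mem_graded u.2 hb
        rwa [zero_add] at this
      · push_cast [hv]; rw [mul_assoc])
    (fun {u v} ⟨b, hb, hu⟩ => by
      refine ⟨b * (v : R), ?_, ?_⟩
      · have := SetLike.mul_mem_graded hb v.2
        rwa [add_zero] at this
      · push_cast [hu]
        rw [mul_assoc, mul_assoc, hcomm v v.2]) with hI
  have hIne : I ≠ ⊥ := by
    intro hbot
    have hzero : ∀ b ∈ 𝒜 (-g), b * y = 0 := by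
      intro b hb
      have hmem : (⟨b * y, hmulr b hb⟩ : ↥(𝒜 0)) ∈ I := by
        rw [hI, TwoSidedIdeal.mem_mk']
        exact ⟨b, hb, rfl⟩
      rw [hbot, TwoSidedIdeal.mem_bot] at hmem
      exact congrArg Subtype.val hmem
    have hone : (1 : R) ∈ Controlled.mulSub (𝒜 g) (𝒜 (-g)) := by
      rw [hstrong g (-g), add_neg_cancel]
      exact SetLike.one_mem_graded 𝒜
    have hall : ∀ z ∈ Controlled.mulSub (𝒜 g) (𝒜 (-g)), z * y = 0 := by
      intro z hz
      induction hz using AddSubgroup.closure_induction with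
      | mem z hz =>
        obtain ⟨c, hc, b, hb, rfl⟩ := hz
        rw [mul_assoc, hzero b hb, mul_zero]
      | zero => simp
      | add u v _ _ hu hv => rw [add_mul, hu, hv, add_zero]
      | neg u _ hu => rw [neg_mul, hu, neg_zero]
    have := hall 1 hone
    rw [one_mul] at this
    exact hy0 this
  have hItop : I = ⊤ := (hsimple.simple.eq_bot_or_eq_top I).resolve_left hIne
  have h1 : ∃ b ∈ 𝒜 (-g), (1 : R) = b * y := by
    have : (1 : ↥(𝒜 0)) ∈ I := hItop ▸ TwoSidedIdeal.mem_top _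
    rw [hI, TwoSidedIdeal.mem_mk'] at this
    simpa using this
  obtain ⟨b, hb, hby⟩ := h1
  -- the map φ : R_0 → R_g, a ↦ a y
  set φ : ↥(𝒜 0) →+ ↥(𝒜 g) := AddMonoidHom.mk'
    (fun a => ⟨(a : R) * y, hmul a a.2⟩)
    (fun u v => by ext; push_cast; rw [add_mul]) with hφ
  have hφinj : Function.Injective φ := by
    rw [injective_iff_map_eq_zero]
    intro a ha
    have hay : (a : R) * y = 0 := congrArg Subtype.val ha
    -- kernel ideal
    set K : TwoSidedIdeal ↥(𝒜 0) := TwoSidedIdeal.mk'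
      {u | (u : R) * y = 0}
      (by simp)
      (fun {u v} hu hv => by
        have hu' : (u : R) * y = 0 := hu
        have hv' : (v : R) * y = 0 := hv
        show ((u + v : ↥(𝒜 0)) : R) * y = 0
        push_cast
        rw [add_mul, hu', hv', add_zero])
      (fun {u} hu => by
        have hu' : (u : R) * y = 0 := hu
        show ((-u : ↥(𝒜 0)) : R) * y = 0
        push_cast
        rw [neg_mul, hu', neg_zero])
      (fun {u v} hv => by
        have hv' : (v : R) * y = 0 := hv
        show ((u * v : ↥(𝒜 0)) : R) * y = 0
        push_cast
        rw [mul_assoc, hv', mul_zero])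
      (fun {u v} hu => by
        have hu' : (u : R) * y = 0 := hu
        show ((u * v : ↥(𝒜 0)) : R) * y = 0
        push_cast
        rw [mul_assoc, hcomm v v.2, ← mul_assoc, hu', zero_mul]) with hK
    have hKne : K ≠ ⊤ := by
      intro htop
      have : (1 : ↥(𝒜 0)) ∈ K := htop ▸ TwoSidedIdeal.mem_top _
      rw [hK, TwoSidedIdeal.mem_mk'] at this
      have h1 : ((1 : ↥(𝒜 0)) : R) * y = 0 := this
      rw [SetLike.GradeZero.coe_one, one_mul] at h1
      exact hy0 h1
    have hKbot : K = ⊥ := (hsimple.simple.eq_bot_or_eq_top K).resolve_right hKne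
    have : a ∈ K := by rw [hK, TwoSidedIdeal.mem_mk']; exact hay
    rw [hKbot, TwoSidedIdeal.mem_bot] at this
    exact this
  have hφsurj : Function.Surjective φ := by
    rintro ⟨r, hr⟩
    have hrb : r * b ∈ 𝒜 0 := by
      have := SetLike.mul_mem_graded hr hb
      rwa [add_neg_cancel] at this
    refine ⟨⟨r * b, hrb⟩, ?_⟩
    ext
    show r * b * y = r
    rw [mul_assoc, ← hby, mul_one]
  set e : ↥(𝒜 0) ≃+ ↥(𝒜 g) := AddEquiv.ofBijective φ ⟨hφinj, hφsurj⟩ with he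
  have hecoe : ∀ u : ↥(𝒜 0), (e u : R) = (u : R) * y := fun u => rfl
  refine ⟨⟨e.symm, ?_, ?_⟩⟩
  · intro a x ha hx hax
    set u := e.symm ⟨x, hx⟩ with hu
    have hux : (u : R) * y = x := by
      have := hecoe u
      rw [hu, AddEquiv.apply_symm_apply] at this
      exact this.symm
    have key : e (⟨a, ha⟩ * u) = ⟨a * x, hax⟩ := by
      ext
      rw [hecoe]
      push_cast
      rw [mul_assoc, hux]
    rw [← key, AddEquiv.symm_apply_apply]
    rfl
  · intro a x ha hx hxa
    set u := e.symm ⟨x, hx⟩ with hu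
    have hux : (u : R) * y = x := by
      have := hecoe u
      rw [hu, AddEquiv.apply_symm_apply] at this
      exact this.symm
    have key : e (u * ⟨a, ha⟩) = ⟨x * a, hxa⟩ := by
      ext
      rw [hecoe]
      push_cast
      rw [mul_assoc, hcomm a ha, ← mul_assoc, hux]
    rw [← key, AddEquiv.symm_apply_apply]
    rfl

end Aux

/-- If `R` is strongly `G`-graded, `R_e` is simple, and `R_g ≅ R_e`
(as `R_e`-bimodules) implies `g = e`, then `C_R(R_e) = Z(R_e)`. -/
theorem stmt14 (𝒜 : G → AddSubgroup R) [GradedRing 𝒜]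
    (hstrong : Controlled.IsStronglyGraded 𝒜)
    (hsimple : IsSimpleRing ↥(𝒜 0))
    (hinj : ∀ g : G, Nonempty (Controlled.BimodIso 𝒜 (𝒜 g) (𝒜 0)) → g = 0) :
    Controlled.CentralizerEqCenter 𝒜 := by
  classical
  ext x
  simp only [Set.mem_setOf_eq]
  constructor
  · intro hx
    refine ⟨?_, hx⟩
    have hcomp : ∀ g : G, ∀ a ∈ 𝒜 0,
        a * (DirectSum.decompose 𝒜 x g : R) = (DirectSum.decompose 𝒜 x g : R) * a := by
      intro g a ha
      have h1 : (DirectSum.decompose 𝒜 (a * x) g : R) = a * (DirectSum.decompose 𝒜 x g : R) := by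
        have := DirectSum.coe_decompose_mul_add_of_left_mem 𝒜 (b := x) (j := g) ha
        rwa [zero_add] at this
      have h2 : (DirectSum.decompose 𝒜 (x * a) g : R) = (DirectSum.decompose 𝒜 x g : R) * a := by
        have := DirectSum.coe_decompose_mul_add_of_right_mem 𝒜 (a := x) (i := g) ha
        rwa [add_zero] at this
      rw [← h1, ← h2, hx a ha]
    have hvanish : ∀ g : G, g ≠ 0 → (DirectSum.decompose 𝒜 x g : R) = 0 := by
      intro g hg
      by_contra h
      exact hg (hinj g (key_iso 𝒜 hstrong hsimple
        (SetLike.coe_mem (DirectSum.decompose 𝒜 x g)) h (hcomp g)))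
    have hsum := DirectSum.sum_support_decompose 𝒜 x
    rw [← hsum]
    refine AddSubgroup.sum_mem _ ?_
    intro g hg
    rcases eq_or_ne g 0 with rfl | hg0
    · exact SetLike.coe_mem _
    · rw [hvanish g hg0]
      exact (𝒜 0).zero_mem
  · rintro ⟨-, h⟩
    exact h
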